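/- Let G be a finite simple graph on vertex set {x_1,…,x_n} without isolated vertices. If a = e_1 + ⋯ + e_r (the 0/1 vector supported on {x_1,…,x_r}) is an irreducible b-cover of the blocker Υ(G), then b = α_0(H), where H = ⟨x_1,…,x_r⟩ is the induced subgraph of G on {x_1,…,x_r}. -/

import Mathlib

/-- `C` is a vertex cover of `G`: every edge has an endpoint in `C`. -/
def IsVC {n : ℕ} (G : SimpleGraph (Fin n)) (C : Finset (Fin n)) : Prop :=
  ∀ i j : Fin n, G.Adj i j → i ∈ C ∨ j ∈ C

/-- `C` is a minimal vertex cover of `G`. -/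
def IsMinVC {n : ℕ} (G : SimpleGraph (Fin n)) (C : Finset (Fin n)) : Prop :=
  IsVC G C ∧ ∀ D : Finset (Fin n), D ⊂ C → ¬ IsVC G D

/-- A nonzero vector `a : ℕ^n` is a `b`-cover of the blocker `Υ(G)` (the clutter of
minimal vertex covers of `G`) if `∑_{i ∈ C} a i ≥ b` for every minimal vertex
cover `C` of `G`. -/
def IsUpsCover {n : ℕ} (G : SimpleGraph (Fin n)) (a : Fin n → ℕ) (b : ℕ) : Prop :=
  a ≠ 0 ∧ ∀ C : Finset (Fin n), IsMinVC G C → b ≤ ∑ i ∈ C, a i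

/-- A `b`-cover of the blocker `Υ(G)` is irreducible if it is not the sum of a
(nonzero) `i`-cover and a (nonzero) `j`-cover of `Υ(G)` with `b = i + j`. -/
def IsIrredUpsCover {n : ℕ} (G : SimpleGraph (Fin n)) (a : Fin n → ℕ) (b : ℕ) : Prop :=
  IsUpsCover G a b ∧
    ¬ ∃ (c d : Fin n → ℕ) (i j : ℕ),
        IsUpsCover G c i ∧ IsUpsCover G d j ∧ a = c + d ∧ b = i + j

/-- The vertex covering number `α₀` of the induced subgraph of `G` on the set of
vertices `S`: the least cardinality of a set `C ⊆ S` covering every edge of `G`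
with both endpoints in `S`. -/
noncomputable def alpha0On {n : ℕ} (G : SimpleGraph (Fin n)) (S : Finset (Fin n)) : ℕ :=
  sInf {k : ℕ | ∃ C : Finset (Fin n), C ⊆ S ∧
    (∀ i ∈ S, ∀ j ∈ S, G.Adj i j → i ∈ C ∨ j ∈ C) ∧ C.card = k}

lemma exists_minVC {n : ℕ} (G : SimpleGraph (Fin n)) (D : Finset (Fin n)) (hD : IsVC G D) :
    ∃ C, C ⊆ D ∧ IsMinVC G C := by
  induction D using Finset.strongInductionOn with
  | _ D ih =>
    by_cases hmin : ∀ D' : Finset (Fin n), D' ⊂ D → ¬ IsVC G D'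
    · exact ⟨D, subset_rfl, hD, hmin⟩
    · push_neg at hmin
      obtain ⟨D', hsub, hvc⟩ := hmin
      obtain ⟨C, hCD, hC⟩ := ih D' hsub hvc
      exact ⟨C, hCD.trans hsub.subset, hC⟩

theorem binary_irreducible_cover_degree {n r : ℕ} (hr : r ≤ n)
    (G : SimpleGraph (Fin n)) (hG : ∀ i : Fin n, ∃ j : Fin n, G.Adj i j)
    (b : ℕ)
    (h : IsIrredUpsCover G (fun i => if (i : ℕ) < r then 1 else 0) b) :
    b = alpha0On G (Finset.univ.filter (fun i : Fin n => (i : ℕ) < r)) := by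
  set S : Finset (Fin n) := Finset.univ.filter (fun i : Fin n => (i : ℕ) < r) with hS
  set A : ℕ := alpha0On G S with hA
  have hmemS : ∀ i : Fin n, i ∈ S ↔ (i : ℕ) < r := by
    intro i; simp [hS]
  -- sum of the indicator over any finset is the cardinality of a filter
  have hsum : ∀ C : Finset (Fin n),
      (∑ i ∈ C, (if (i : ℕ) < r then 1 else 0)) = (C.filter (fun i : Fin n => (i : ℕ) < r)).card := by
    intro C; rw [Finset.card_filter]
  -- every minimal vertex cover meets S in at least A vertices
  have claim1 : ∀ C : Finset (Fin n), IsVC G C →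
      A ≤ (C.filter (fun i : Fin n => (i : ℕ) < r)).card := by
    intro C hC
    apply Nat.sInf_le
    refine ⟨C.filter (fun i : Fin n => (i : ℕ) < r), ?_, ?_, rfl⟩
    · intro x hx
      rw [hmemS]
      exact (Finset.mem_filter.mp hx).2
    · intro i hi j hj hadj
      rcases hC i j hadj with h1 | h1
      · exact Or.inl (Finset.mem_filter.mpr ⟨h1, (hmemS i).mp hi⟩)
      · exact Or.inr (Finset.mem_filter.mpr ⟨h1, (hmemS j).mp hj⟩)
  -- the infimum is attained
  have hne : ∃ C : Finset (Fin n), C ⊆ S ∧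
      (∀ i ∈ S, ∀ j ∈ S, G.Adj i j → i ∈ C ∨ j ∈ C) ∧ C.card = S.card :=
    ⟨S, subset_rfl, fun i hi _ _ _ => Or.inl hi, rfl⟩
  obtain ⟨C₀, hC₀S, hC₀cov, hC₀card⟩ :=
    Nat.sInf_mem (⟨S.card, hne⟩ : Set.Nonempty {k : ℕ | ∃ C : Finset (Fin n), C ⊆ S ∧
      (∀ i ∈ S, ∀ j ∈ S, G.Adj i j → i ∈ C ∨ j ∈ C) ∧ C.card = k})
  have hC₀card : C₀.card = A := hC₀card
  -- Step 1 : b ≤ A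
  have step1 : b ≤ A := by
    have hDvc : IsVC G (C₀ ∪ Finset.univ.filter (fun i : Fin n => ¬ ((i : ℕ) < r))) := by
      intro i j hadj
      by_cases hi : (i : ℕ) < r
      · by_cases hj : (j : ℕ) < r
        · rcases hC₀cov i ((hmemS i).mpr hi) j ((hmemS j).mpr hj) hadj with h1 | h1
          · exact Or.inl (Finset.mem_union_left _ h1)
          · exact Or.inr (Finset.mem_union_left _ h1)
        · exact Or.inr (Finset.mem_union_right _ (by simp; omega))
      · exact Or.inl (Finset.mem_union_right _ (by simp; omega))
    obtain ⟨C, hCD, hCmin⟩ := exists_minVC G _ hDvc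
    have hb := h.1.2 C hCmin
    rw [hsum] at hb
    refine hb.trans ?_
    rw [← hC₀card]
    apply Finset.card_le_card
    intro x hx
    obtain ⟨hxC, hxr⟩ := Finset.mem_filter.mp hx
    rcases Finset.mem_union.mp (hCD hxC) with h1 | h1
    · exact h1
    · exact absurd hxr (Finset.mem_filter.mp h1).2
  -- Step 2 : A ≤ b
  by_contra hne2
  have hba : b < A := by omega
  -- r ≥ 1 since a ≠ 0
  have hr1 : 1 ≤ r := by
    by_contra hr0
    apply h.1.1
    funext i
    simp only [Pi.zero_apply]
    have : ¬ ((i : ℕ) < r) := by omega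
    simp [this]
  -- r = 1 impossible since then A = 0
  have hr2 : 2 ≤ r := by
    by_contra hrr
    have hr1' : r = 1 := by omega
    have : A ≤ 0 := by
      apply Nat.sInf_le
      refine ⟨∅, Finset.empty_subset _, ?_, rfl⟩
      intro i hi j hj hadj
      exfalso
      have hi' := (hmemS i).mp hi
      have hj' := (hmemS j).mp hj
      have : i = j := by
        apply Fin.ext; omega
      exact G.loopless.irrefl i (this ▸ hadj)
    omega
  have hn2 : 2 ≤ n := le_trans hr2 hr
  -- decompose a = c + d, contradicting irreducibility
  set i1 : Fin n := ⟨1, by omega⟩ with hi1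
  set c : Fin n → ℕ := fun i => if 0 < (i : ℕ) ∧ (i : ℕ) < r then 1 else 0 with hc
  set d : Fin n → ℕ := fun i => if (i : ℕ) = 0 then 1 else 0 with hd
  apply h.2
  refine ⟨c, d, b, 0, ⟨?_, ?_⟩, ⟨?_, fun C _ => Nat.zero_le _⟩, ?_, by omega⟩
  · -- c ≠ 0
    intro h0
    have := congrFun h0 i1
    simp only [hc, hi1, Pi.zero_apply] at this
    rw [if_pos (by constructor <;> omega)] at this
    exact one_ne_zero this
  · -- c is a b-cover
    intro C hC
    have h1 := claim1 C hC.1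
    have hcsum : (∑ i ∈ C, c i) = (C.filter (fun i : Fin n => 0 < (i : ℕ) ∧ (i : ℕ) < r)).card := by
      rw [hc, Finset.card_filter]
    rw [hcsum]
    set i0 : Fin n := ⟨0, by omega⟩ with hi0
    have hsub : C.filter (fun i : Fin n => (i : ℕ) < r) ⊆
        insert i0 (C.filter (fun i : Fin n => 0 < (i : ℕ) ∧ (i : ℕ) < r)) := by
      intro x hx
      obtain ⟨hxC, hxr⟩ := Finset.mem_filter.mp hx
      by_cases hx0 : (x : ℕ) = 0
      · exact Finset.mem_insert.mpr (Or.inl (by apply Fin.ext; simp [hi0, hx0]))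
      · exact Finset.mem_insert.mpr (Or.inr (Finset.mem_filter.mpr ⟨hxC, by omega, hxr⟩))
    have hcard := (Finset.card_le_card hsub).trans (Finset.card_insert_le _ _)
    omega
  · -- d ≠ 0
    intro h0
    have := congrFun h0 (⟨0, by omega⟩ : Fin n)
    simp [hd] at this
  · -- a = c + d
    funext i
    simp only [Pi.add_apply, hc, hd]
    split_ifs <;> omega
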